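/- Let ℓ be a prime with ℓ ≠ 3. Then ℓ does not divide the resultant R_ℓ = Res(X^{2ℓ} − 1, (X−1)^{2ℓ} − 1) of the polynomials X^{2ℓ} − 1 and (X−1)^{2ℓ} − 1 in ℤ[X]. In particular R_ℓ ≠ 0. -/

import Mathlib

open Polynomial

/-- The Sylvester matrix of two integer polynomials `p`, `q` (with respect to their
natural degrees `m = deg p`, `n = deg q`): the first `n` rows carry the coefficients
of `p` in decreasing order, the remaining `m` rows those of `q`. -/
def sylvesterMatrix (p q : Polynomial ℤ) :
    Matrix (Fin (q.natDegree + p.natDegree)) (Fin (q.natDegree + p.natDegree)) ℤ :=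
  Matrix.of fun i j =>
    if (i : ℕ) < q.natDegree then
      (if (i : ℕ) ≤ (j : ℕ) ∧ (j : ℕ) ≤ (i : ℕ) + p.natDegree then
        p.coeff (p.natDegree + i - j) else 0)
    else
      (if (i : ℕ) - q.natDegree ≤ (j : ℕ) ∧ (j : ℕ) ≤ ((i : ℕ) - q.natDegree) + q.natDegree then
        q.coeff (q.natDegree + ((i : ℕ) - q.natDegree) - j) else 0)

/-- The resultant of two integer polynomials, as the determinant of their Sylvester matrix. -/
def intResultant (p q : Polynomial ℤ) : ℤ := (sylvesterMatrix p q).det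

set_option maxHeartbeats 1600000 in
theorem unit_eq_stmt5 (ℓ : ℕ) (hℓ : ℓ.Prime) (h3 : ℓ ≠ 3) :
    ¬ ((ℓ : ℤ) ∣ intResultant (X ^ (2 * ℓ) - 1) ((X - 1) ^ (2 * ℓ) - 1)) ∧
      intResultant (X ^ (2 * ℓ) - 1) ((X - 1) ^ (2 * ℓ) - 1) ≠ 0 := by
  haveI : Fact ℓ.Prime := ⟨hℓ⟩
  have hℓ0 : 0 < ℓ := hℓ.pos
  set p : ℤ[X] := X ^ (2 * ℓ) - 1 with hpdef
  set q : ℤ[X] := (X - 1) ^ (2 * ℓ) - 1 with hqdef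
  set φ := Int.castRingHom (ZMod ℓ) with hφdef
  have hp : p.natDegree = 2 * ℓ := by
    simpa using natDegree_X_pow_sub_C (n := 2 * ℓ) (r := (1 : ℤ))
  have hq : q.natDegree = 2 * ℓ := by
    have : ((X - 1) ^ (2 * ℓ) - C 1 : ℤ[X]).natDegree = 2 * ℓ := by
      rw [natDegree_sub_C, natDegree_pow,
        show (X - 1 : ℤ[X]) = X - C 1 by simp, natDegree_X_sub_C, mul_one]
    simpa using this
  have hpc : ∀ n, φ (p.coeff n) = if n = 2 * ℓ then 1 else if n = 0 then -1 else 0 := by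
    intro n
    rw [hpdef, coeff_sub, coeff_X_pow, coeff_one]
    split_ifs <;> first | (exfalso; omega) | simp
  have hqmap : q.map φ = X ^ (2 * ℓ) - 2 * X ^ ℓ := by
    have h1 : ((X - 1 : (ZMod ℓ)[X])) ^ ℓ = X ^ ℓ - 1 := by rw [sub_pow_char]; simp
    have h2 : ((X - 1 : (ZMod ℓ)[X])) ^ (2 * ℓ) = (X ^ ℓ - 1) ^ 2 := by
      rw [mul_comm, pow_mul, h1]
    rw [hqdef]
    simp only [Polynomial.map_sub, Polynomial.map_pow, Polynomial.map_one, Polynomial.map_X]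
    rw [h2]
    ring
  have hqc : ∀ n, φ (q.coeff n) = if n = 2 * ℓ then 1 else if n = ℓ then -2 else 0 := by
    intro n
    rw [← coeff_map, hqmap, coeff_sub, coeff_X_pow,
      show ((2 : (ZMod ℓ)[X]) * X ^ ℓ) = C 2 * X ^ ℓ by rw [map_ofNat],
      coeff_C_mul, coeff_X_pow]
    split_ifs <;> first | (exfalso; omega) | simp
  have hn : q.natDegree + p.natDegree = 4 * ℓ := by rw [hp, hq]; ring
  set B : Matrix (Fin 4) (Fin 4) (ZMod ℓ) :=
    Matrix.of (fun a b : Fin 4 =>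
      if (a : ℕ) = 0 then (if (b : ℕ) = 0 then 1 else if (b : ℕ) = 2 then -1 else 0)
      else if (a : ℕ) = 1 then (if (b : ℕ) = 1 then 1 else if (b : ℕ) = 3 then -1 else 0)
      else if (a : ℕ) = 2 then (if (b : ℕ) = 0 then 1 else if (b : ℕ) = 1 then -2 else 0)
      else (if (b : ℕ) = 1 then 1 else if (b : ℕ) = 2 then -2 else 0)) with hBdef
  set E : Fin (q.natDegree + p.natDegree) ≃ Fin 4 × Fin ℓ :=
    (finCongr hn).trans finProdFinEquiv.symm with hEdef
  have hEval : ∀ (a : Fin 4) (k : Fin ℓ), ((E.symm (a, k)) : ℕ) = (k : ℕ) + ℓ * (a : ℕ) := by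
    intro a k; rfl
  have key : Matrix.reindex E E ((sylvesterMatrix p q).map φ)
      = Matrix.blockDiagonal (fun _ : Fin ℓ => B) := by
    ext ⟨a, k⟩ ⟨b, k'⟩
    rw [Matrix.reindex_apply, Matrix.submatrix_apply, Matrix.map_apply,
      Matrix.blockDiagonal_apply]
    simp only [sylvesterMatrix, Matrix.of_apply, hEval, hp, hq, apply_ite φ, map_zero,
      hpc, hqc]
    obtain ⟨k, hk⟩ := k
    obtain ⟨k', hk'⟩ := k'
    obtain ⟨a, ha⟩ := a
    obtain ⟨b, hb⟩ := b
    simp only [hBdef, Matrix.of_apply, Fin.mk.injEq]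
    interval_cases a <;> interval_cases b <;>
        simp only [Nat.mul_zero, Nat.mul_one, Nat.add_zero, Nat.zero_add, reduceIte] <;>
      split_ifs <;> first | rfl | (exact False.elim ‹False›) | (exfalso; omega)
  have hdet : φ (intResultant p q) = (-3) ^ ℓ := by
    rw [intResultant, RingHom.map_det, RingHom.mapMatrix_apply, ← Matrix.det_reindex_self E, key,
      Matrix.det_blockDiagonal]
    have hB : B.det = -3 := by
      rw [hBdef]
      simp [Matrix.det_succ_row_zero, Fin.sum_univ_succ, Fin.succAbove]
      ring
    simp [hB]
  have h30 : (-3 : ZMod ℓ) ≠ 0 := by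
    rw [neg_ne_zero]
    intro h
    rw [show ((3 : ZMod ℓ)) = ((3 : ℕ) : ZMod ℓ) by norm_num,
      ZMod.natCast_eq_zero_iff] at h
    exact h3 ((Nat.prime_dvd_prime_iff_eq hℓ Nat.prime_three).mp h)
  have hne : φ (intResultant p q) ≠ 0 := by
    rw [hdet]; exact pow_ne_zero _ h30
  constructor
  · intro hdvd
    exact hne ((ZMod.intCast_zmod_eq_zero_iff_dvd _ _).mpr hdvd)
  · intro h0
    apply hne
    rw [h0, map_zero]
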